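/- Let A ∈ ℝ^{m×n}, b ∈ ℝ^m, let R ∈ ℝ^{m×m} and Q ∈ ℝ^{n×n} be symmetric positive definite, and let λ ∈ ℝ. With B_k ∈ ℝ^{(k+1)×k} lower bidiagonal (diagonal α_1, ..., α_k > 0, subdiagonal β_2, ..., β_{k+1} > 0), β_1 > 0, V_k ∈ ℝ^{n×k}, V_{k+1} = [V_k, v_{k+1}], U_{k+1} ∈ ℝ^{m×(k+1)}, assume b = β_1 U_{k+1} e_1, A Q V_k = U_{k+1} B_k, Aᵀ R⁻¹ U_{k+1} = V_k B_kᵀ + α_{k+1} v_{k+1} e_{k+1}ᵀ, and V_{k+1}ᵀ Q V_{k+1} = I_{k+1}. Then for every z ∈ ℝ^k, ‖Aᵀ R⁻¹ (A Q V_k z − b)‖_Q² + λ² ‖V_k z‖_Q² = ‖B̄_k z − β_1 α_1 e_1‖₂² + λ² ‖z‖₂², where B̄_k ∈ ℝ^{(k+1)×k} has top k×k block B_kᵀ B_k and last row β_{k+1} α_{k+1} e_kᵀ. Consequently the gen-LSMR problem over the range of V_k is equivalent to the projected problem min over z ∈ ℝ^k of ½‖B̄_k z − β_1 α_1 e_1‖₂²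 + (λ²/2)‖z‖₂². -/

import Mathlib

open Matrix

theorem stmt_17 {m n k : ℕ} (hk : 0 < k) (A : Matrix (Fin m) (Fin n) ℝ) (b : Fin m → ℝ)
    (R : Matrix (Fin m) (Fin m) ℝ) (Q : Matrix (Fin n) (Fin n) ℝ)
    (hR : R.PosDef) (hQ : Q.PosDef) (lam : ℝ)
    (αs βs : Fin k → ℝ) (hαs : ∀ j, 0 < αs j) (hβs : ∀ j, 0 < βs j)
    (ak1 : ℝ) (β1 : ℝ) (hβ1 : 0 < β1)
    (B : Matrix (Fin (k + 1)) (Fin k) ℝ)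
    (hB : ∀ i j, B i j =
        if (i : ℕ) = (j : ℕ) then αs j else if (i : ℕ) = (j : ℕ) + 1 then βs j else 0)
    (Vk : Matrix (Fin n) (Fin k) ℝ) (vk1 : Fin n → ℝ)
    (Uk1 : Matrix (Fin m) (Fin (k + 1)) ℝ)
    (hb : b = β1 • (Uk1 *ᵥ (Pi.single 0 1 : Fin (k + 1) → ℝ)))
    (hAQV : A * Q * Vk = Uk1 * B)
    (hATU : Aᵀ * R⁻¹ * Uk1
        = Vk * Bᵀ + ak1 • vecMulVec vk1 (Pi.single (Fin.last k) 1))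
    (hVorth : (Matrix.of fun i : Fin n => Fin.snoc (Vk i) (vk1 i))ᵀ * Q *
        (Matrix.of fun i : Fin n => Fin.snoc (Vk i) (vk1 i)) = 1) :
    (∀ z : Fin k → ℝ,
      ((Aᵀ * R⁻¹) *ᵥ ((A * Q) *ᵥ (Vk *ᵥ z) - b)) ⬝ᵥ
          (Q *ᵥ ((Aᵀ * R⁻¹) *ᵥ ((A * Q) *ᵥ (Vk *ᵥ z) - b))) +
          lam ^ 2 * ((Vk *ᵥ z) ⬝ᵥ (Q *ᵥ (Vk *ᵥ z)))
        = ((Matrix.of fun (i : Fin (k + 1)) (j : Fin k) =>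
              if h : (i : ℕ) < k then (Bᵀ * B) ⟨i, h⟩ j
              else if (j : ℕ) = k - 1 then βs ⟨k - 1, Nat.sub_lt hk Nat.one_pos⟩ * ak1 else 0)
            *ᵥ z - (β1 * αs ⟨0, hk⟩) • (Pi.single 0 1 : Fin (k + 1) → ℝ)) ⬝ᵥ
          ((Matrix.of fun (i : Fin (k + 1)) (j : Fin k) =>
              if h : (i : ℕ) < k then (Bᵀ * B) ⟨i, h⟩ j
              else if (j : ℕ) = k - 1 then βs ⟨k - 1, Nat.sub_lt hk Nat.one_pos⟩ * ak1 else 0)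
            *ᵥ z - (β1 * αs ⟨0, hk⟩) • (Pi.single 0 1 : Fin (k + 1) → ℝ)) +
          lam ^ 2 * (z ⬝ᵥ z)) ∧
    (∀ z0 : Fin k → ℝ,
      (∀ z : Fin k → ℝ,
          (1 / 2) * (((Matrix.of fun (i : Fin (k + 1)) (j : Fin k) =>
                if h : (i : ℕ) < k then (Bᵀ * B) ⟨i, h⟩ j
                else if (j : ℕ) = k - 1 then βs ⟨k - 1, Nat.sub_lt hk Nat.one_pos⟩ * ak1 else 0)
              *ᵥ z0 - (β1 * αs ⟨0, hk⟩) • (Pi.single 0 1 : Fin (k + 1) → ℝ)) ⬝ᵥ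
            ((Matrix.of fun (i : Fin (k + 1)) (j : Fin k) =>
                if h : (i : ℕ) < k then (Bᵀ * B) ⟨i, h⟩ j
                else if (j : ℕ) = k - 1 then βs ⟨k - 1, Nat.sub_lt hk Nat.one_pos⟩ * ak1 else 0)
              *ᵥ z0 - (β1 * αs ⟨0, hk⟩) • (Pi.single 0 1 : Fin (k + 1) → ℝ))) +
            (lam ^ 2 / 2) * (z0 ⬝ᵥ z0)
          ≤ (1 / 2) * (((Matrix.of fun (i : Fin (k + 1)) (j : Fin k) =>
                if h : (i : ℕ) < k then (Bᵀ * B) ⟨i, h⟩ j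
                else if (j : ℕ) = k - 1 then βs ⟨k - 1, Nat.sub_lt hk Nat.one_pos⟩ * ak1 else 0)
              *ᵥ z - (β1 * αs ⟨0, hk⟩) • (Pi.single 0 1 : Fin (k + 1) → ℝ)) ⬝ᵥ
            ((Matrix.of fun (i : Fin (k + 1)) (j : Fin k) =>
                if h : (i : ℕ) < k then (Bᵀ * B) ⟨i, h⟩ j
                else if (j : ℕ) = k - 1 then βs ⟨k - 1, Nat.sub_lt hk Nat.one_pos⟩ * ak1 else 0)
              *ᵥ z - (β1 * αs ⟨0, hk⟩) • (Pi.single 0 1 : Fin (k + 1) → ℝ))) +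
            (lam ^ 2 / 2) * (z ⬝ᵥ z)) ↔
      (∀ z : Fin k → ℝ,
          (1 / 2) * (((Aᵀ * R⁻¹) *ᵥ ((A * Q) *ᵥ (Vk *ᵥ z0) - b)) ⬝ᵥ
              (Q *ᵥ ((Aᵀ * R⁻¹) *ᵥ ((A * Q) *ᵥ (Vk *ᵥ z0) - b)))) +
            (lam ^ 2 / 2) * ((Vk *ᵥ z0) ⬝ᵥ (Q *ᵥ (Vk *ᵥ z0)))
          ≤ (1 / 2) * (((Aᵀ * R⁻¹) *ᵥ ((A * Q) *ᵥ (Vk *ᵥ z) - b)) ⬝ᵥ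
              (Q *ᵥ ((Aᵀ * R⁻¹) *ᵥ ((A * Q) *ᵥ (Vk *ᵥ z) - b)))) +
            (lam ^ 2 / 2) * ((Vk *ᵥ z) ⬝ᵥ (Q *ᵥ (Vk *ᵥ z))))) := by

  set V1 : Matrix (Fin n) (Fin (k + 1)) ℝ :=
    Matrix.of fun i : Fin n => Fin.snoc (Vk i) (vk1 i) with hV1def
  set e1 : Fin (k + 1) → ℝ := (Pi.single 0 1 : Fin (k + 1) → ℝ) with he1
  set Bb : Matrix (Fin (k + 1)) (Fin k) ℝ :=
    Matrix.of fun (i : Fin (k + 1)) (j : Fin k) =>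
      if h : (i : ℕ) < k then (Bᵀ * B) ⟨i, h⟩ j
      else if (j : ℕ) = k - 1 then βs ⟨k - 1, Nat.sub_lt hk Nat.one_pos⟩ * ak1 else 0
    with hBbdef
  have jlt : k - 1 < k := Nat.sub_lt hk Nat.one_pos
  have hsnocMul : ∀ (y : Fin k → ℝ) (c : ℝ), V1 *ᵥ Fin.snoc y c = Vk *ᵥ y + c • vk1 := by
    intro y c
    funext i
    simp [hV1def, Matrix.mulVec, dotProduct, Fin.sum_univ_castSucc, mul_comm]
  have horth : ∀ w : Fin (k + 1) → ℝ, (V1 *ᵥ w) ⬝ᵥ (Q *ᵥ (V1 *ᵥ w)) = w ⬝ᵥ w := by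
    intro w
    have h1 : w ⬝ᵥ ((V1ᵀ * Q * V1) *ᵥ w) = w ⬝ᵥ w := by rw [hVorth]; simp
    calc (V1 *ᵥ w) ⬝ᵥ (Q *ᵥ (V1 *ᵥ w))
        = w ⬝ᵥ ((V1ᵀ * Q * V1) *ᵥ w) := by
          rw [← Matrix.mulVec_mulVec, ← Matrix.mulVec_mulVec,
            Matrix.dotProduct_mulVec w, Matrix.vecMul_transpose]
      _ = w ⬝ᵥ w := h1
  have hVz : ∀ z : Fin k → ℝ, Vk *ᵥ z = V1 *ᵥ Fin.snoc z 0 := by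
    intro z; rw [hsnocMul]; simp
  have hB0 : ∀ j : Fin k, B 0 j = if j = (⟨0, hk⟩ : Fin k) then αs ⟨0, hk⟩ else 0 := by
    intro j
    rw [hB]
    simp only [Fin.val_zero]
    by_cases hc : (j : ℕ) = 0
    · have hj : j = (⟨0, hk⟩ : Fin k) := Fin.ext hc
      subst hj
      simp
    · have h0 : ¬ j = (⟨0, hk⟩ : Fin k) := fun h => hc (by rw [h])
      rw [if_neg h0]
      split_ifs with h1 h2
      · exact absurd h1.symm hc
      · simp at h2
      · rfl
  have hBlast : ∀ j : Fin k, B (Fin.last k) j =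
      if j = (⟨k - 1, jlt⟩ : Fin k) then βs ⟨k - 1, jlt⟩ else 0 := by
    intro j
    rw [hB]
    simp only [Fin.val_last]
    have hjk := j.isLt
    by_cases hc : (j : ℕ) = k - 1
    · have hj : j = (⟨k - 1, jlt⟩ : Fin k) := Fin.ext hc
      subst hj
      rw [if_neg (by omega), if_pos (by omega), if_pos rfl]
    · rw [if_neg (by omega), if_neg (by omega), if_neg (by simp [Fin.ext_iff]; omega)]
  have hcond : ∀ j : Fin k, ((j : ℕ) = k - 1) = (j = (⟨k - 1, jlt⟩ : Fin k)) := by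
    intro j; rw [eq_iff_iff]; exact ⟨fun h => Fin.ext h, fun h => by rw [h]⟩
  have hBvlast : ∀ z : Fin k → ℝ,
      (B *ᵥ z) (Fin.last k) = βs ⟨k - 1, jlt⟩ * z ⟨k - 1, jlt⟩ := by
    intro z
    simp only [Matrix.mulVec, dotProduct]
    rw [Finset.sum_congr rfl (fun j _ => by rw [hBlast])]
    simp [ite_mul]
  have hres : ∀ z : Fin k → ℝ,
      (Aᵀ * R⁻¹) *ᵥ ((A * Q) *ᵥ (Vk *ᵥ z) - b)
        = V1 *ᵥ Fin.snoc (Bᵀ *ᵥ (B *ᵥ z - β1 • e1))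
            (ak1 * (B *ᵥ z - β1 • e1) (Fin.last k)) := by
    intro z
    have h1 : (A * Q) *ᵥ (Vk *ᵥ z) - b = Uk1 *ᵥ (B *ᵥ z - β1 • e1) := by
      rw [Matrix.mulVec_mulVec, hAQV, ← Matrix.mulVec_mulVec, hb,
        Matrix.mulVec_sub, Matrix.mulVec_smul]
    rw [h1, Matrix.mulVec_mulVec, hATU, hsnocMul, Matrix.add_mulVec,
      ← Matrix.mulVec_mulVec]
    congr 1
    funext i
    simp [Matrix.vecMulVec, Matrix.mulVec, dotProduct, Pi.single_apply,
      mul_ite, ite_mul, Matrix.smul_apply]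
    ring
  have hvec : ∀ z : Fin k → ℝ,
      (Fin.snoc (Bᵀ *ᵥ (B *ᵥ z - β1 • e1))
          (ak1 * (B *ᵥ z - β1 • e1) (Fin.last k)) : Fin (k + 1) → ℝ)
        = Bb *ᵥ z - (β1 * αs ⟨0, hk⟩) • e1 := by
    intro z
    funext i
    induction i using Fin.lastCases with
    | last =>
        have he1last : e1 (Fin.last k) = 0 := by
          rw [he1]
          exact Pi.single_eq_of_ne (by simp [Fin.ext_iff]; omega) 1
        have hL : (Bb *ᵥ z) (Fin.last k)
            = βs ⟨k - 1, jlt⟩ * ak1 * z ⟨k - 1, jlt⟩ := by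
          simp only [hBbdef, Matrix.mulVec, dotProduct, Matrix.of_apply, Fin.val_last]
          rw [Finset.sum_congr rfl (fun j _ => by rw [dif_neg (lt_irrefl k)])]
          simp only [hcond]
          simp [ite_mul]
        simp only [Fin.snoc_last, Pi.sub_apply, Pi.smul_apply, smul_eq_mul, hL,
          hBvlast, he1last]
        ring
    | cast i' =>
        have hR : (Bb *ᵥ z) (Fin.castSucc i') = ((Bᵀ * B) *ᵥ z) i' := by
          simp only [hBbdef, Matrix.mulVec, dotProduct, Matrix.of_apply,
            Fin.coe_castSucc]
          rw [Finset.sum_congr rfl (fun j _ => by rw [dif_pos i'.isLt])]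
        have hLsnoc : (Fin.snoc (Bᵀ *ᵥ (B *ᵥ z - β1 • e1))
            (ak1 * (B *ᵥ z - β1 • e1) (Fin.last k)) : Fin (k + 1) → ℝ)
            (Fin.castSucc i') = (Bᵀ *ᵥ (B *ᵥ z - β1 • e1)) i' := Fin.snoc_castSucc _ _ _
        rw [hLsnoc]
        have hmul : (Bᵀ *ᵥ (B *ᵥ z - β1 • e1)) i'
            = ((Bᵀ * B) *ᵥ z) i' - β1 * B 0 i' := by
          rw [Matrix.mulVec_sub, Matrix.mulVec_smul, Matrix.mulVec_mulVec, he1,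
            Matrix.mulVec_single]
          simp [Matrix.transpose_apply]
        rw [hmul]
        simp only [Pi.sub_apply, Pi.smul_apply, smul_eq_mul, hR, hB0]
        by_cases hc : i' = (⟨0, hk⟩ : Fin k)
        · subst hc
          have hcz : (Fin.castSucc (⟨0, hk⟩ : Fin k)) = (0 : Fin (k + 1)) := by
            simp [Fin.ext_iff]
          rw [if_pos rfl, hcz, he1, Pi.single_eq_same]
          ring
        · have hcz : (Fin.castSucc i') ≠ (0 : Fin (k + 1)) := fun h => hc (Fin.ext (by
            have h2 := congrArg Fin.val h
            simpa using h2))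
          rw [if_neg hc, he1, Pi.single_eq_of_ne hcz]
          ring
  have hdotsnoc : ∀ (y : Fin k → ℝ) (c : ℝ),
      (Fin.snoc y c : Fin (k + 1) → ℝ) ⬝ᵥ Fin.snoc y c = y ⬝ᵥ y + c * c := by
    intro y c; simp [dotProduct, Fin.sum_univ_castSucc]
  have key : ∀ z : Fin k → ℝ,
      ((Aᵀ * R⁻¹) *ᵥ ((A * Q) *ᵥ (Vk *ᵥ z) - b)) ⬝ᵥ
          (Q *ᵥ ((Aᵀ * R⁻¹) *ᵥ ((A * Q) *ᵥ (Vk *ᵥ z) - b))) +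
          lam ^ 2 * ((Vk *ᵥ z) ⬝ᵥ (Q *ᵥ (Vk *ᵥ z)))
        = (Bb *ᵥ z - (β1 * αs ⟨0, hk⟩) • e1) ⬝ᵥ
          (Bb *ᵥ z - (β1 * αs ⟨0, hk⟩) • e1) + lam ^ 2 * (z ⬝ᵥ z) := by
    intro z
    rw [hres z, horth, hvec z, hVz z, horth, hdotsnoc]
    ring
  refine ⟨key, ?_⟩
  intro z0
  constructor
  · intro h z
    have h1 := key z0
    have h2 := key z
    have h3 := h z
    linarith
  · intro h z
    have h1 := key z0
    have h2 := key z
    have h3 := h z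
    linarith
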